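/- If F is a family of pairwise disjoint non-empty closed subsets of the Čech–Stone remainder ℕ* = βℕ \ ℕ, then the space X(F) is Hausdorff. -/

import Mathlib

/-- ℕ* : the nonprincipal ultrafilters on ℕ, with the topology inherited from βℕ. -/
def NStar : Type := {U : Ultrafilter ℕ // (U : Filter ℕ) ≤ Filter.cofinite}

instance : TopologicalSpace NStar := instTopologicalSpaceSubtype

/-- A* : the set of nonprincipal ultrafilters containing A. -/
def AStar (A : Set ℕ) : Set NStar := {U | A ∈ U.1}

/-- The space X(F): underlying set ℕ ⊔ F. -/
def XF (F : Set (Set NStar)) : Type := ℕ ⊕ F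

/-- The coarsest topology making each {n} (n ∈ ℕ) open, and each {K} ∪ A open
whenever K ∈ F, A ⊆ ℕ and K ⊆ A*. -/
instance (F : Set (Set NStar)) : TopologicalSpace (XF F) :=
  TopologicalSpace.generateFrom
    ({S | ∃ n : ℕ, S = {Sum.inl n}} ∪
     {S | ∃ (K : F) (A : Set ℕ), (K : Set NStar) ⊆ AStar A ∧
        S = insert (Sum.inr K) (Sum.inl '' A)})

lemma nstar_inducing : Topology.IsInducing (Subtype.val : NStar → Ultrafilter ℕ) := ⟨rfl⟩

lemma nstar_set_closed :
    IsClosed {U : Ultrafilter ℕ | (U : Filter ℕ) ≤ Filter.cofinite} := by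
  have : {U : Ultrafilter ℕ | (U : Filter ℕ) ≤ Filter.cofinite}
      = ⋂ n : ℕ, {U : Ultrafilter ℕ | ({n}ᶜ : Set ℕ) ∈ U} := by
    ext U
    simp only [Set.mem_setOf_eq, Set.mem_iInter]
    constructor
    · intro h n
      exact h (by simp [Filter.mem_cofinite])
    · intro h s hs
      rw [Filter.mem_cofinite] at hs
      have : (⋂ n ∈ sᶜ, ({n}ᶜ : Set ℕ)) ∈ U := (Filter.biInter_mem hs).2 fun n _ => h n
      refine Filter.mem_of_superset this ?_
      intro x hx
      by_contra hxs
      simpa using Set.mem_iInter₂.1 hx x hxs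
  rw [this]
  exact isClosed_iInter fun n => ultrafilter_isClosed_basic _

instance : CompactSpace NStar := by
  constructor
  refine (nstar_inducing.isCompact_iff (s := (Set.univ : Set NStar))).2 ?_
  have : (Subtype.val : NStar → Ultrafilter ℕ) '' Set.univ
      = {U : Ultrafilter ℕ | (U : Filter ℕ) ≤ Filter.cofinite} := by
    rw [Set.image_univ]
    exact Subtype.range_coe
  erw [this]
  exact nstar_set_closed.isCompact

lemma astar_basis :
    TopologicalSpace.IsTopologicalBasis
      ((Set.preimage (Subtype.val : NStar → Ultrafilter ℕ)) '' ultrafilterBasis ℕ) :=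
  ultrafilterBasis_is_basis.isInducing nstar_inducing

lemma astar_open (A : Set ℕ) : IsOpen (AStar A) :=
  (ultrafilter_isOpen_basic A).preimage nstar_inducing.continuous

/-- Key separation lemma: disjoint closed sets in ℕ* are separated by a set of the form A*. -/
lemma sep_lemma {K L : Set NStar} (hK : IsClosed K) (hL : IsClosed L)
    (hd : Disjoint K L) : ∃ A : Set ℕ, K ⊆ AStar A ∧ L ⊆ AStar Aᶜ := by
  -- for each U ∈ K, find A with U ∈ AStar A and AStar A ∩ L = ∅
  have key : ∀ U ∈ K, ∃ A : Set ℕ, U ∈ AStar A ∧ Disjoint (AStar A) L := by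
    intro U hU
    have hUL : U ∈ Lᶜ := fun h => (Set.disjoint_left.1 hd) hU h
    obtain ⟨v, hv, hUv, hvL⟩ :=
      astar_basis.exists_subset_of_mem_open hUL hL.isOpen_compl
    obtain ⟨w, hw, rfl⟩ := hv
    obtain ⟨A, rfl⟩ := hw
    exact ⟨A, hUv, Set.disjoint_left.2 fun x hx hxL => hvL hx hxL⟩
  choose! A hA₁ hA₂ using key
  have hKc : IsCompact K := hK.isCompact
  have hcover : K ⊆ ⋃ U : K, AStar (A U) := fun U hU =>
    Set.mem_iUnion.2 ⟨⟨U, hU⟩, hA₁ U hU⟩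
  obtain ⟨t, ht⟩ := hKc.elim_finite_subcover (fun U : K => AStar (A U.1))
    (fun U => astar_open _) hcover
  refine ⟨⋃ U ∈ t, A U.1, ?_, ?_⟩
  · intro V hV
    obtain ⟨U, hU, hVU⟩ := Set.mem_iUnion₂.1 (ht hV)
    show (⋃ U ∈ t, A U.1) ∈ V.1
    refine Filter.mem_of_superset hVU fun x hx => Set.mem_iUnion₂.2 ⟨U, hU, hx⟩
  · intro V hV
    show (⋃ U ∈ t, A U.1)ᶜ ∈ V.1
    rw [Ultrafilter.compl_mem_iff_notMem]
    intro hmem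
    obtain ⟨U, hUt, hAU⟩ :=
      (Ultrafilter.finite_biUnion_mem_iff t.finite_toSet).1 hmem
    exact Set.disjoint_left.1 (hA₂ U.1 U.2) hAU hV


lemma xf_open_singleton (F : Set (Set NStar)) (n : ℕ) :
    IsOpen ({Sum.inl n} : Set (XF F)) :=
  TopologicalSpace.isOpen_generateFrom_of_mem (Or.inl ⟨n, rfl⟩)

lemma xf_open_insert (F : Set (Set NStar)) (K : F) (A : Set ℕ)
    (h : (K : Set NStar) ⊆ AStar A) :
    IsOpen (insert (Sum.inr K) (Sum.inl '' A) : Set (XF F)) :=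
  TopologicalSpace.isOpen_generateFrom_of_mem (Or.inr ⟨K, A, h, rfl⟩)

lemma nonprincipal_mem (U : NStar) (n : ℕ) : ({n}ᶜ : Set ℕ) ∈ U.1 :=
  U.2 (by simp [Filter.mem_cofinite])

/-- If F consists of pairwise disjoint non-empty closed subsets of ℕ*,
then X(F) is Hausdorff. -/
theorem xf_hausdorff (F : Set (Set NStar)) (hne : ∀ K ∈ F, K.Nonempty)
    (hcl : ∀ K ∈ F, IsClosed K)
    (hdisj : ∀ K ∈ F, ∀ L ∈ F, K ≠ L → Disjoint K L) :
    T2Space (XF F) := by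
  constructor
  intro x y hxy
  obtain n | K := x <;> obtain m | L := y
  · refine ⟨{Sum.inl n}, {Sum.inl m}, xf_open_singleton F n, xf_open_singleton F m,
      rfl, rfl, ?_⟩
    exact Set.disjoint_singleton.2 hxy
  · refine ⟨{Sum.inl n}, insert (Sum.inr L) (Sum.inl '' ({n}ᶜ : Set ℕ)),
      xf_open_singleton F n, xf_open_insert F L _ (fun U hU => nonprincipal_mem U n),
      rfl, Set.mem_insert _ _, ?_⟩
    refine (Set.disjoint_singleton_left (a := (Sum.inl n : XF F))).2 ?_
    rintro (h | ⟨a, ha, h⟩)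
    · cases h
    · exact ha (by simpa using Sum.inl.inj h)
  · refine ⟨insert (Sum.inr K) (Sum.inl '' ({m}ᶜ : Set ℕ)), {Sum.inl m},
      xf_open_insert F K _ (fun U hU => nonprincipal_mem U m), xf_open_singleton F m,
      Set.mem_insert _ _, rfl, ?_⟩
    refine (Set.disjoint_singleton_right (a := (Sum.inl m : XF F))).2 ?_
    rintro (h | ⟨a, ha, h⟩)
    · cases h
    · exact ha (by simpa using Sum.inl.inj h)
  · have hKL : K ≠ L := fun h => hxy (by rw [h])
    have hKL' : (K : Set NStar) ≠ (L : Set NStar) := fun h => hKL (Subtype.coe_injective h)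
    obtain ⟨A, hKA, hLA⟩ := sep_lemma (hcl K K.2) (hcl L L.2)
      (hdisj K K.2 L L.2 hKL')
    refine ⟨insert (Sum.inr K) (Sum.inl '' A), insert (Sum.inr L) (Sum.inl '' Aᶜ),
      xf_open_insert F K A hKA, xf_open_insert F L Aᶜ hLA,
      Set.mem_insert _ _, Set.mem_insert _ _, ?_⟩
    rw [Set.disjoint_left]
    rintro x (rfl | ⟨a, ha, rfl⟩) (h | ⟨b, hb, h⟩)
    · exact hKL (Sum.inr.inj h)
    · cases h
    · cases h
    · exact hb (Sum.inl.inj h ▸ ha)
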